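/- Let Λ₀, Λ₁ be real numbers with 0 < Λ₀ ≤ Λ₁ and Λ₁ ≥ 1, set Λ := ⌈Λ₁/Λ₀⌉, and fix α ∈ (0, 1/2). Then there exists a constant C > 0, depending only on α, Λ₀, Λ₁ and not on h, such that for every h ∈ (0,1) the following holds: with N₀ := ⌈log(1/h)/(6Λ₁)⌉, let Z^∁ be the set of words w = w₀…w_{N₀−1} in the two-letter alphabet {1, ⋆} having fewer than α N₀ letters equal to 1, and let X be the set of words of length (6Λ+1) N₀ over {1, ⋆} which are concatenations w^{(1)} w^{(2)} ⋯ w^{(6Λ+1)} with every w^{(ℓ)} ∈ Z^∁. Then #X = (#Z^∁)^{6Λ+1} ≤ C h^{−(Λ₀^{−1} + 2) α (1 − log α)}. -/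
import Mathlib


/-- The `ℓ`-th block of length `N₀` of a word `w` of length `(6Λ+1)N₀` over `Bool`
(where `true` encodes the letter `1` and `false` the letter `⋆`). -/
def blockWord (Λ N₀ : ℕ) (w : Fin ((6 * Λ + 1) * N₀) → Bool)
    (ℓ : Fin (6 * Λ + 1)) : Fin N₀ → Bool :=
  fun j => w ⟨ℓ.1 * N₀ + j.1, by
    have hj := j.isLt
    have hl : ℓ.1 + 1 ≤ 6 * Λ + 1 := ℓ.isLt
    calc ℓ.1 * N₀ + j.1 < ℓ.1 * N₀ + N₀ := by omega
      _ = (ℓ.1 + 1) * N₀ := by ring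
      _ ≤ (6 * Λ + 1) * N₀ := Nat.mul_le_mul hl (le_refl N₀)⟩

/-- Splitting a word into its blocks is a bijection. -/
lemma blockWord_card (Λ N₀ : ℕ) (Zc : Set (Fin N₀ → Bool))
    (X : Set (Fin ((6 * Λ + 1) * N₀) → Bool))
    (hX : X = {w | ∀ ℓ : Fin (6 * Λ + 1), blockWord Λ N₀ w ℓ ∈ Zc}) :
    X.ncard = Zc.ncard ^ (6 * Λ + 1) := by
  classical
  set e : (Fin ((6 * Λ + 1) * N₀) → Bool) ≃ (Fin (6 * Λ + 1) → Fin N₀ → Bool) :=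
    (Equiv.arrowCongr finProdFinEquiv.symm (Equiv.refl Bool)).trans
      (Equiv.curry _ _ _) with he
  have hblock : ∀ w ℓ, e w ℓ = blockWord Λ N₀ w ℓ := by
    intro w ℓ
    funext j
    show w (finProdFinEquiv (ℓ, j)) = _
    unfold blockWord
    congr 1
    apply Fin.ext
    show j.1 + N₀ * ℓ.1 = ℓ.1 * N₀ + j.1
    ring
  have himg : e '' X = Set.pi Set.univ (fun _ : Fin (6 * Λ + 1) => Zc) := by
    ext f
    constructor
    · rintro ⟨w, hw, rfl⟩
      intro ℓ _
      rw [hblock]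
      exact (hX ▸ hw) ℓ
    · intro hf
      refine ⟨e.symm f, ?_, e.apply_symm_apply f⟩
      rw [hX]
      intro ℓ
      have := hblock (e.symm f) ℓ
      rw [e.apply_symm_apply] at this
      rw [← this]
      exact hf ℓ (Set.mem_univ ℓ)
  calc X.ncard = Nat.card X := (Nat.card_coe_set_eq X).symm
    _ = Nat.card (e '' X) := Nat.card_congr (Equiv.image e X)
    _ = Nat.card (Set.pi Set.univ (fun _ : Fin (6 * Λ + 1) => Zc)) := by rw [himg]
    _ = Nat.card (Fin (6 * Λ + 1) → Zc) := Nat.card_congr (Equiv.Set.univPi _)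
    _ = Nat.card Zc ^ (6 * Λ + 1) := by
        rw [Nat.card_fun, Nat.card_eq_fintype_card (α := Fin (6 * Λ + 1)),
          Fintype.card_fin]
    _ = Zc.ncard ^ (6 * Λ + 1) := by rw [Nat.card_coe_set_eq]

/-- Entropy-type bound on the number of words with few `true` letters. -/
lemma Zc_card_le (N₀ : ℕ) (α : ℝ) (hα : 0 < α) (hα1 : α ≤ 1)
    (Zc : Set (Fin N₀ → Bool))
    (hZc : Zc = {w | ((Finset.univ.filter fun j => w j = true).card : ℝ) < α * N₀}) :
    (Zc.ncard : ℝ) ≤ Real.exp (α * N₀ * (1 - Real.log α)) := by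
  classical
  set k : (Fin N₀ → Bool) → ℕ := fun w => (Finset.univ.filter fun j => w j = true).card
    with hk
  have key : (Zc.ncard : ℝ) * α ^ (α * N₀ : ℝ) ≤ (1 + α) ^ N₀ := by
    have h1 : ∀ w : Fin N₀ → Bool, (α : ℝ) ^ (k w) =
        ∏ j : Fin N₀, (if w j = true then α else 1) := by
      intro w
      rw [Finset.prod_ite, Finset.prod_const, Finset.prod_const, one_pow, mul_one]
    have h2 : ∑ w : Fin N₀ → Bool, α ^ (k w) = (1 + α) ^ N₀ := by
      have := Finset.prod_univ_sum (fun _ : Fin N₀ => (Finset.univ : Finset Bool))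
        (fun _ b => if b = true then α else 1)
      simp only [Fintype.piFinset_univ] at this
      calc ∑ w : Fin N₀ → Bool, α ^ (k w)
          = ∑ w : Fin N₀ → Bool, ∏ j : Fin N₀, (if w j = true then α else 1) := by
            simp_rw [h1]
        _ = ∏ _j : Fin N₀, ∑ b : Bool, (if b = true then α else 1) := this.symm
        _ = (1 + α) ^ N₀ := by rw [Finset.prod_const]; norm_num [add_comm]
    have hstep : (Zc.ncard : ℝ) * α ^ (α * N₀ : ℝ) ≤ ∑ w ∈ Zc.toFinset, (α : ℝ) ^ (k w) := by
      rw [Set.ncard_eq_toFinset_card', ← nsmul_eq_mul, ← Finset.sum_const]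
      apply Finset.sum_le_sum
      intro w hw
      have hwZ : (k w : ℝ) < α * N₀ := by
        have := Set.mem_toFinset.mp hw
        rw [hZc] at this
        exact this
      calc (α : ℝ) ^ (α * N₀ : ℝ) ≤ α ^ ((k w : ℕ) : ℝ) :=
            Real.rpow_le_rpow_of_exponent_ge hα hα1 hwZ.le
        _ = α ^ (k w) := Real.rpow_natCast α (k w)
    calc (Zc.ncard : ℝ) * α ^ (α * N₀ : ℝ) ≤ ∑ w ∈ Zc.toFinset, (α : ℝ) ^ (k w) := hstep
      _ ≤ ∑ w : Fin N₀ → Bool, (α : ℝ) ^ (k w) :=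
          Finset.sum_le_sum_of_subset_of_nonneg (Finset.subset_univ _)
            (fun w _ _ => pow_nonneg hα.le _)
      _ = (1 + α) ^ N₀ := h2
  have hrpow : α ^ (α * N₀ : ℝ) = Real.exp (Real.log α * (α * N₀)) :=
    Real.rpow_def_of_pos hα _
  have hexp : ((1 : ℝ) + α) ^ N₀ ≤ Real.exp (α * N₀) := by
    calc ((1 : ℝ) + α) ^ N₀ ≤ Real.exp α ^ N₀ := by
          apply pow_le_pow_left₀ (by linarith) _ N₀
          linarith [Real.add_one_le_exp α]
      _ = Real.exp (α * N₀) := by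
          rw [← Real.exp_nat_mul]; ring_nf
  have hEpos : 0 < Real.exp (Real.log α * (α * N₀)) := Real.exp_pos _
  rw [hrpow] at key
  have := (le_div_iff₀ hEpos).mpr (key.trans hexp)
  calc (Zc.ncard : ℝ) ≤ Real.exp (α * N₀) / Real.exp (Real.log α * (α * N₀)) := this
    _ = Real.exp (α * N₀ - Real.log α * (α * N₀)) := (Real.exp_sub _ _).symm
    _ = Real.exp (α * N₀ * (1 - Real.log α)) := by ring_nf

theorem stmt5 :
    ∀ Λ₀ Λ₁ α : ℝ, 0 < Λ₀ → Λ₀ ≤ Λ₁ → 1 ≤ Λ₁ → 0 < α → α < 1 / 2 →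
    ∃ C > 0, ∀ h : ℝ, 0 < h → h < 1 →
    ∀ N₀ Λ : ℕ, N₀ = ⌈Real.log (1 / h) / (6 * Λ₁)⌉₊ → Λ = ⌈Λ₁ / Λ₀⌉₊ →
    ∀ (Zc : Set (Fin N₀ → Bool)) (X : Set (Fin ((6 * Λ + 1) * N₀) → Bool)),
      Zc = {w | ((Finset.univ.filter fun j => w j = true).card : ℝ) < α * N₀} →
      X = {w | ∀ ℓ : Fin (6 * Λ + 1), blockWord Λ N₀ w ℓ ∈ Zc} →
      X.ncard = Zc.ncard ^ (6 * Λ + 1) ∧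
      (X.ncard : ℝ) ≤ C * h ^ (-((Λ₀⁻¹ + 2) * α * (1 - Real.log α))) := by
  intro Λ₀ Λ₁ α hΛ₀ hΛ₀₁ hΛ₁ hα hα2
  have hlogα : Real.log α < 0 := Real.log_neg hα (by linarith)
  set B : ℝ := α * (1 - Real.log α) with hB
  have hBpos : 0 < B := by
    apply mul_pos hα; linarith
  set Λ' : ℕ := ⌈Λ₁ / Λ₀⌉₊ with hΛ'
  refine ⟨Real.exp (B * (6 * Λ' + 1)), Real.exp_pos _, ?_⟩
  intro h hh0 hh1 N₀ Λ hN₀ hΛeq Zc X hZc hX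
  subst hΛeq
  have hcard : X.ncard = Zc.ncard ^ (6 * Λ' + 1) := blockWord_card Λ' N₀ Zc X hX
  refine ⟨hcard, ?_⟩
  have hZcb : (Zc.ncard : ℝ) ≤ Real.exp (α * N₀ * (1 - Real.log α)) :=
    Zc_card_le N₀ α hα (by linarith) Zc hZc
  set L : ℝ := Real.log (1 / h) with hL
  have hLpos : 0 < L := Real.log_pos (by rw [lt_div_iff₀ hh0]; linarith)
  -- bound on N₀
  have hN₀le : (N₀ : ℝ) ≤ L / (6 * Λ₁) + 1 := by
    rw [hN₀]
    exact (Nat.ceil_lt_add_one (by positivity)).le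
  -- bound on Λ'
  have hΛ'le : (Λ' : ℝ) ≤ Λ₁ / Λ₀ + 1 := (Nat.ceil_lt_add_one (by positivity)).le
  -- key arithmetic bound
  have hΛ₁pos : (0:ℝ) < Λ₁ := by linarith
  have harith : (6 * (Λ' : ℝ) + 1) * (N₀ : ℝ) ≤ (Λ₀⁻¹ + 2) * L + (6 * Λ' + 1) := by
    have h1 : (6 * (Λ' : ℝ) + 1) * (N₀ : ℝ) ≤ (6 * Λ' + 1) * (L / (6 * Λ₁) + 1) := by
      apply mul_le_mul_of_nonneg_left hN₀le (by positivity)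
    have h2 : (6 * (Λ' : ℝ) + 1) / (6 * Λ₁) ≤ Λ₀⁻¹ + 2 := by
      rw [div_le_iff₀ (by positivity)]
      have : (6 * (Λ' : ℝ) + 1) ≤ 6 * Λ₁ / Λ₀ + 7 := by
        have := hΛ'le
        have h6 : (6:ℝ) * Λ' ≤ 6 * (Λ₁/Λ₀) + 6 := by linarith
        have h6' : (6:ℝ) * Λ₁ / Λ₀ = 6 * (Λ₁/Λ₀) := mul_div_assoc 6 Λ₁ Λ₀
        linarith
      have hinv : 6 * Λ₁ / Λ₀ = Λ₀⁻¹ * (6 * Λ₁) := by rw [div_eq_mul_inv]; ring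
      have h7 : (7:ℝ) ≤ 2 * (6 * Λ₁) := by linarith
      calc (6 * (Λ' : ℝ) + 1) ≤ 6 * Λ₁ / Λ₀ + 7 := this
        _ = Λ₀⁻¹ * (6 * Λ₁) + 7 := by rw [hinv]
        _ ≤ Λ₀⁻¹ * (6 * Λ₁) + 2 * (6 * Λ₁) := by linarith
        _ = (Λ₀⁻¹ + 2) * (6 * Λ₁) := by ring
    have h3 : (6 * (Λ' : ℝ) + 1) * (L / (6 * Λ₁)) ≤ (Λ₀⁻¹ + 2) * L := by
      have : (6 * (Λ' : ℝ) + 1) * (L / (6 * Λ₁)) = ((6 * Λ' + 1) / (6 * Λ₁)) * L := by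
        ring
      rw [this]
      exact mul_le_mul_of_nonneg_right h2 hLpos.le
    calc (6 * (Λ' : ℝ) + 1) * (N₀ : ℝ) ≤ (6 * Λ' + 1) * (L / (6 * Λ₁) + 1) := h1
      _ = (6 * Λ' + 1) * (L / (6 * Λ₁)) + (6 * Λ' + 1) := by ring
      _ ≤ (Λ₀⁻¹ + 2) * L + (6 * Λ' + 1) := by linarith
  -- final bound
  have hXb : (X.ncard : ℝ) ≤ Real.exp (B * ((6 * Λ' + 1) * N₀)) := by
    rw [hcard]
    push_cast
    calc ((Zc.ncard : ℝ)) ^ (6 * Λ' + 1) ≤ Real.exp (α * N₀ * (1 - Real.log α)) ^ (6 * Λ' + 1) :=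
          pow_le_pow_left₀ (by positivity) hZcb _
      _ = Real.exp (B * ((6 * Λ' + 1) * N₀)) := by
          rw [← Real.exp_nat_mul]
          congr 1
          push_cast
          ring
  have hrpow : h ^ (-((Λ₀⁻¹ + 2) * α * (1 - Real.log α))) =
      Real.exp ((Λ₀⁻¹ + 2) * B * L) := by
    rw [Real.rpow_def_of_pos hh0, hL, Real.log_div one_ne_zero (ne_of_gt hh0),
      Real.log_one]
    congr 1
    ring
  rw [hrpow, ← Real.exp_add]
  calc (X.ncard : ℝ) ≤ Real.exp (B * ((6 * Λ' + 1) * N₀)) := hXb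
    _ ≤ Real.exp (B * ((Λ₀⁻¹ + 2) * L + (6 * Λ' + 1))) := by
        apply Real.exp_le_exp.mpr
        exact mul_le_mul_of_nonneg_left harith hBpos.le
    _ = Real.exp (B * (6 * Λ' + 1) + (Λ₀⁻¹ + 2) * B * L) := by ring_nf
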